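/- arXiv:1512.05974 — 7 statements merged into one kernel-verified Lean document; each statement's English description precedes it below -/
import Mathlib

section
/- Let f be a flow in an equality network N, let λ ≥ 0, and let (S,T) be a cut at λ. Let K ⊆ B∖S be a set of buyers with r_f(b) ≥ λ for every b ∈ K, and let L = {c ∈ C∖T : (b,c) ∈ E for some b ∈ K}. Assume every good in L is saturated by f and f(b,c) = 0 for every b ∈ B∖(S∪K) and every c ∈ L. Then (S∪K, T∪L) is a cut at λ and cap_λ(S∪K, T∪L) ≤ cap_λ(S,T); i.e., moving K and L from the sink side to the source side does not increase the capacity of the cut. -/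
open scoped Classical

/-- An equality network: buyers `B`, goods `C`, adjacency `E`,
budgets `e > 0` and prices `p > 0`; every buyer is adjacent to some good
and every good is adjacent to some buyer. -/
structure EqNet (B C : Type) [Fintype B] [Fintype C] [Nonempty B] [Nonempty C] where
  E : B → C → Prop
  e : B → ℝ
  p : C → ℝ
  buyer_adj : ∀ b, ∃ c, E b c
  good_adj : ∀ c, ∃ b, E b c
  e_pos : ∀ b, 0 < e b
  p_pos : ∀ c, 0 < p c

variable {B C : Type} [Fintype B] [Fintype C] [Nonempty B] [Nonempty C]

/-- A flow in an equality network. -/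
def IsFlow (N : EqNet B C) (f : B → C → ℝ) : Prop :=
  (∀ b c, 0 ≤ f b c) ∧ (∀ b c, ¬ N.E b c → f b c = 0) ∧
  (∀ b, ∑ c, f b c ≤ N.e b) ∧ (∀ c, ∑ b, f b c ≤ N.p c)

/-- The value of a flow. -/
def flowValue (f : B → C → ℝ) : ℝ := ∑ b, ∑ c, f b c

/-- A maximum flow. -/
def IsMaxFlow (N : EqNet B C) (f : B → C → ℝ) : Prop :=
  IsFlow N f ∧ ∀ g, IsFlow N g → flowValue g ≤ flowValue f

/-- The surplus of buyer `b` with respect to flow `f`. -/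
def surplus (N : EqNet B C) (f : B → C → ℝ) (b : B) : ℝ := N.e b - ∑ c, f b c

/-- A good `c` is saturated by `f`. -/
def Saturated (N : EqNet B C) (f : B → C → ℝ) (c : C) : Prop := ∑ b, f b c = N.p c

/-- A balanced flow: a maximum flow minimizing the two-norm of the surplus vector. -/
def IsBalancedFlow (N : EqNet B C) (f : B → C → ℝ) : Prop :=
  IsMaxFlow N f ∧
  ∀ g, IsMaxFlow N g → ∑ b, (surplus N f b) ^ 2 ≤ ∑ b, (surplus N g b) ^ 2

/-- A cut of the parametric network: `S ⊆ B`, `T ⊆ C` on the source side,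
with every good adjacent to a buyer in `S` belonging to `T`. -/
def IsCut (N : EqNet B C) (S : Finset B) (T : Finset C) : Prop :=
  ∀ b ∈ S, ∀ c, N.E b c → c ∈ T

/-- The capacity of the cut `(S, T)` at parameter `lam`. -/
noncomputable def cutCap (N : EqNet B C) (lam : ℝ) (S : Finset B) (T : Finset C) : ℝ :=
  ∑ b ∈ Sᶜ, max 0 (N.e b - lam) + ∑ c ∈ T, N.p c

/-- `(S, T)` is a minimum cut at `lam`. -/
def IsMinCut (N : EqNet B C) (lam : ℝ) (S : Finset B) (T : Finset C) : Prop :=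
  IsCut N S T ∧ ∀ S' T', IsCut N S' T' → cutCap N lam S T ≤ cutCap N lam S' T'

/-- `(S, T)` is the minimum cut at `lam` with minimum sink side. -/
def HasMinSink (N : EqNet B C) (lam : ℝ) (S : Finset B) (T : Finset C) : Prop :=
  IsMinCut N lam S T ∧ ∀ S' T', IsMinCut N lam S' T' → S' ⊆ S ∧ T' ⊆ T

/-- The min-cut capacity function `κ(λ)`. -/
noncomputable def kappa (N : EqNet B C) (lam : ℝ) : ℝ :=
  sInf {x | ∃ S T, IsCut N S T ∧ cutCap N lam S T = x}

/-- `B_1 ∪ … ∪ B_i` (and similarly for goods): union of the blocks with index `≤ i`. -/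
noncomputable def blocksUpTo {h : ℕ} {α : Type} (D : Fin h → Finset α) (i : Fin h) : Finset α :=
  (Finset.univ.filter (fun j => j ≤ i)).biUnion D

/-- Moving `K` (buyers of surplus `≥ λ` on the sink side) together with
`L` (the sink-side goods adjacent to `K`) from the sink side to the source side gives a
cut whose capacity did not increase, provided the goods in `L` are saturated and all
flow into `L` comes from `S ∪ K`. -/
theorem move_to_source_not_increase (N : EqNet B C) (f : B → C → ℝ) (hf : IsFlow N f)
    (lam : ℝ) (hlam : 0 ≤ lam)
    (S : Finset B) (T : Finset C) (hcut : IsCut N S T)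
    (K : Finset B) (hKS : ∀ b ∈ K, b ∉ S) (hKr : ∀ b ∈ K, lam ≤ surplus N f b)
    (L : Finset C) (hL : L = Finset.univ.filter (fun c => c ∉ T ∧ ∃ b ∈ K, N.E b c))
    (hLsat : ∀ c ∈ L, Saturated N f c)
    (hKonly : ∀ b, b ∉ S → b ∉ K → ∀ c ∈ L, f b c = 0) :
    IsCut N (S ∪ K) (T ∪ L) ∧ cutCap N lam (S ∪ K) (T ∪ L) ≤ cutCap N lam S T := by
  obtain ⟨hf0, hfE, hfe, hfp⟩ := hf
  constructor
  · intro b hb c hE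
    rcases Finset.mem_union.mp hb with hbS | hbK
    · exact Finset.mem_union_left _ (hcut b hbS c hE)
    · by_cases hcT : c ∈ T
      · exact Finset.mem_union_left _ hcT
      · refine Finset.mem_union_right _ ?_
        rw [hL]
        exact Finset.mem_filter.mpr ⟨Finset.mem_univ c, hcT, b, hbK, hE⟩
  · -- zero-flow from outside K into L
    have hzero : ∀ b, b ∉ K → ∀ c ∈ L, f b c = 0 := by
      intro b hbK c hc
      by_cases hbS : b ∈ S
      · have hcL := hc
        rw [hL, Finset.mem_filter] at hcL
        by_cases hE : N.E b c
        · exact absurd (hcut b hbS c hE) hcL.2.1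
        · exact hfE b c hE
      · exact hKonly b hbS hbK c hc
    have key : ∑ c ∈ L, N.p c ≤ ∑ b ∈ K, max 0 (N.e b - lam) := by
      have h1 : ∑ c ∈ L, N.p c = ∑ b ∈ K, ∑ c ∈ L, f b c := by
        calc ∑ c ∈ L, N.p c = ∑ c ∈ L, ∑ b, f b c := by
              refine Finset.sum_congr rfl fun c hc => (hLsat c hc).symm
          _ = ∑ b, ∑ c ∈ L, f b c := Finset.sum_comm
          _ = ∑ b ∈ K, ∑ c ∈ L, f b c := by
              refine (Finset.sum_subset (Finset.subset_univ K) ?_).symm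
              intro b _ hbK
              exact Finset.sum_eq_zero fun c hc => hzero b hbK c hc
      rw [h1]
      refine Finset.sum_le_sum fun b hb => ?_
      have h2 : ∑ c ∈ L, f b c ≤ ∑ c, f b c :=
        Finset.sum_le_sum_of_subset_of_nonneg (Finset.subset_univ L)
          (fun c _ _ => hf0 b c)
      have h3 : ∑ c, f b c ≤ N.e b - lam := by
        have := hKr b hb
        unfold surplus at this
        linarith
      calc ∑ c ∈ L, f b c ≤ N.e b - lam := le_trans h2 h3
        _ ≤ max 0 (N.e b - lam) := le_max_right _ _
    have hKsub : K ⊆ Sᶜ := fun b hb => Finset.mem_compl.mpr (hKS b hb)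
    have hTLdisj : Disjoint T L := by
      rw [Finset.disjoint_right]
      intro c hc
      rw [hL, Finset.mem_filter] at hc
      exact hc.2.1
    have hcompl : (S ∪ K)ᶜ = Sᶜ \ K := by
      ext b
      simp [Finset.mem_compl, Finset.mem_sdiff, not_or]
    unfold cutCap
    rw [hcompl, Finset.sum_union hTLdisj]
    have hsplit : ∑ b ∈ Sᶜ \ K, max 0 (N.e b - lam) + ∑ b ∈ K, max 0 (N.e b - lam)
        = ∑ b ∈ Sᶜ, max 0 (N.e b - lam) := Finset.sum_sdiff hKsub
    linarith
end

section
/- Let f be a flow in an equality network N, let λ > 0, and let F ⊆ B be a nonempty set of buyers with r_f(b) < λ for every b ∈ F. Then ∑_{b∈F} max(0, e(b) − λ) < ∑_{c∈Γ(F)} p(c), where Γ(F) = {c ∈ C : (b,c) ∈ E for some b ∈ F}. -/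
open scoped Classical

variable {B C : Type} [Fintype B] [Fintype C] [Nonempty B] [Nonempty C]

/-- If `F` is a nonempty set of buyers, each of surplus `< λ` w.r.t. a
flow `f` and `λ > 0`, then `∑_{b∈F} max(0, e(b) − λ) < ∑_{c∈Γ(F)} p(c)`. -/
theorem small_surplus_strict (N : EqNet B C) (f : B → C → ℝ) (hf : IsFlow N f)
    (lam : ℝ) (hlam : 0 < lam) (F : Finset B) (hFne : F.Nonempty)
    (hsmall : ∀ b ∈ F, surplus N f b < lam) :
    ∑ b ∈ F, max 0 (N.e b - lam) <
      ∑ c ∈ Finset.univ.filter (fun c => ∃ b ∈ F, N.E b c), N.p c := by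

  obtain ⟨hnn, hzero, hrow, hcol⟩ := hf
  set Γ : Finset C := Finset.univ.filter (fun c => ∃ b ∈ F, N.E b c) with hΓ
  -- each buyer's column sum is supported on Γ
  have hsupp : ∀ b ∈ F, ∑ c, f b c = ∑ c ∈ Γ, f b c := by
    intro b hb
    rw [Finset.sum_filter]
    apply Finset.sum_congr rfl
    intro c _
    by_cases h : ∃ b' ∈ F, N.E b' c
    · simp [h]
    · simp only [h, if_false]
      exact hzero b c (fun hE => h ⟨b, hb, hE⟩)
  have hB : ∑ b ∈ F, ∑ c, f b c ≤ ∑ c ∈ Γ, N.p c := by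
    calc ∑ b ∈ F, ∑ c, f b c = ∑ b ∈ F, ∑ c ∈ Γ, f b c :=
          Finset.sum_congr rfl hsupp
      _ = ∑ c ∈ Γ, ∑ b ∈ F, f b c := Finset.sum_comm
      _ ≤ ∑ c ∈ Γ, ∑ b, f b c := by
          apply Finset.sum_le_sum
          intro c _
          exact Finset.sum_le_sum_of_subset_of_nonneg (Finset.subset_univ F)
            (fun b _ _ => hnn b c)
      _ ≤ ∑ c ∈ Γ, N.p c := Finset.sum_le_sum (fun c _ => hcol c)
  have hweak : ∀ b ∈ F, max 0 (N.e b - lam) ≤ ∑ c, f b c := by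
    intro b hb
    have hs := hsmall b hb
    unfold surplus at hs
    rcases le_or_gt (N.e b - lam) 0 with h | h
    · rw [max_eq_left h]
      exact Finset.sum_nonneg (fun c _ => hnn b c)
    · rw [max_eq_right h.le]; linarith
  by_cases hex : ∃ b₀ ∈ F, lam < N.e b₀
  · obtain ⟨b₀, hb₀, he₀⟩ := hex
    have hstrict : ∑ b ∈ F, max 0 (N.e b - lam) < ∑ b ∈ F, ∑ c, f b c := by
      apply Finset.sum_lt_sum (fun b hb => hweak b hb)
      refine ⟨b₀, hb₀, ?_⟩
      have hs := hsmall b₀ hb₀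
      unfold surplus at hs
      rw [max_eq_right (by linarith : (0:ℝ) ≤ N.e b₀ - lam)]
      linarith
    linarith
  · push_neg at hex
    have hL : ∑ b ∈ F, max 0 (N.e b - lam) = 0 := by
      apply Finset.sum_eq_zero
      intro b hb
      exact max_eq_left (by linarith [hex b hb])
    rw [hL]
    obtain ⟨b, hb⟩ := hFne
    obtain ⟨c, hc⟩ := N.buyer_adj b
    have hcΓ : c ∈ Γ := by
      rw [hΓ, Finset.mem_filter]
      exact ⟨Finset.mem_univ c, b, hb, hc⟩
    exact Finset.sum_pos' (fun c' _ => (N.p_pos c').le) ⟨c, hcΓ, N.p_pos c⟩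
end

section
/- For every i with 1 ≤ i < h and every λ with r_{i+1} < λ ≤ r_i, if (S,T) is a minimum cut at λ with minimum sink side, then B_1 ∪ … ∪ B_i ⊆ S and C_1 ∪ … ∪ C_i ⊆ T. -/
open scoped Classical

variable {B C : Type} [Fintype B] [Fintype C] [Nonempty B] [Nonempty C]

/-- For `1 ≤ i < h` and `r_{i+1} < λ ≤ r_i`, the minimum cut of minimum
sink side at `λ` contains `B_1 ∪ … ∪ B_i` and `C_1 ∪ … ∪ C_i` on its source side. -/
theorem min_sink_cut_contains_blocks (N : EqNet B C)
    {h : ℕ} (hpos : 0 < h)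
    (BB : Fin h → Finset B) (CC : Fin h → Finset C) (r : Fin h → ℝ)
    (fstar : B → C → ℝ) (hbal : IsBalancedFlow N fstar)
    (hBne : ∀ i, (BB i).Nonempty)
    (hBdisj : ∀ i j, i ≠ j → Disjoint (BB i) (BB j))
    (hBcover : Finset.univ.biUnion BB = Finset.univ)
    (hCdisj : ∀ i j, i ≠ j → Disjoint (CC i) (CC j))
    (hCcover : Finset.univ.biUnion CC = Finset.univ)
    (hranti : StrictAnti r)
    (hrlast : r ⟨h - 1, Nat.sub_lt hpos Nat.one_pos⟩ = 0)
    (hsurp : ∀ i, ∀ b ∈ BB i, surplus N fstar b = r i)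
    (hsat : ∀ i : Fin h, (i : ℕ) + 1 < h → ∀ c ∈ CC i, Saturated N fstar c)
    (hflow0 : ∀ i j : Fin h, j < i → ∀ b ∈ BB i, ∀ c ∈ CC j, fstar b c = 0)
    (hnoedge : ∀ i j : Fin h, i < j → ∀ b ∈ BB i, ∀ c ∈ CC j, ¬ N.E b c)
    (hrecv : ∀ i : Fin h, (i : ℕ) + 1 < h → ∀ c ∈ CC i, ∃ b ∈ BB i, 0 < fstar b c)
    (i : Fin h) (hi : (i : ℕ) + 1 < h) (lam : ℝ)
    (hlam1 : r ⟨(i : ℕ) + 1, hi⟩ < lam) (hlam2 : lam ≤ r i)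
    (S : Finset B) (T : Finset C) (hST : HasMinSink N lam S T) :
    blocksUpTo BB i ⊆ S ∧ blocksUpTo CC i ⊆ T := by
  classical
  obtain ⟨⟨hcutST, hminST⟩, hmsink⟩ := hST
  obtain ⟨hf0, hfE, hfe, hfp⟩ := hbal.1.1
  set B' := blocksUpTo BB i with hB'
  set C' := blocksUpTo CC i with hC'
  have hmemB' : ∀ b, b ∈ B' ↔ ∃ j, j ≤ i ∧ b ∈ BB j := by
    intro b; simp [hB', blocksUpTo, Finset.mem_biUnion, Finset.mem_filter]
  have hmemC' : ∀ c, c ∈ C' ↔ ∃ j, j ≤ i ∧ c ∈ CC j := by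
    intro c; simp [hC', blocksUpTo, Finset.mem_biUnion, Finset.mem_filter]
  have hcoverB : ∀ b : B, ∃ k, b ∈ BB k := by
    intro b
    have : b ∈ Finset.univ.biUnion BB := by rw [hBcover]; exact Finset.mem_univ b
    simpa using this
  have hcoverC : ∀ c : C, ∃ k, c ∈ CC k := by
    intro c
    have : c ∈ Finset.univ.biUnion CC := by rw [hCcover]; exact Finset.mem_univ c
    simpa using this
  have hcut' : IsCut N (S ∪ B') (T ∪ C') := by
    intro b hb c hEbc
    rcases Finset.mem_union.1 hb with hb | hb
    · exact Finset.mem_union_left _ (hcutST b hb c hEbc)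
    · obtain ⟨j, hji, hbj⟩ := (hmemB' b).1 hb
      obtain ⟨k, hck⟩ := hcoverC c
      have hkj : k ≤ j := by
        by_contra hk
        exact hnoedge j k (lt_of_not_ge hk) b hbj c hck hEbc
      exact Finset.mem_union_right _ ((hmemC' c).2 ⟨k, le_trans hkj hji, hck⟩)
  have key : ∑ c ∈ C' \ T, N.p c ≤ ∑ b ∈ B' \ S, max 0 (N.e b - lam) := by
    have hsatle : ∀ c ∈ C' \ T, N.p c = ∑ b ∈ B' \ S, fstar b c := by
      intro c hc
      obtain ⟨hcC', hcT⟩ := Finset.mem_sdiff.1 hc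
      obtain ⟨j, hji, hcj⟩ := (hmemC' c).1 hcC'
      have hsatc : ∑ b, fstar b c = N.p c := by
        apply hsat j _ c hcj
        exact lt_of_le_of_lt (Nat.succ_le_succ hji) hi
      rw [← hsatc]
      refine (Finset.sum_subset (Finset.subset_univ _) ?_).symm
      intro b _ hb
      by_cases hbS : b ∈ S
      · by_contra hne
        have hE : N.E b c := by
          by_contra hnE; exact hne (hfE b c hnE)
        exact hcT (hcutST b hbS c hE)
      · have hbB' : b ∉ B' := fun hh => hb (Finset.mem_sdiff.2 ⟨hh, hbS⟩)
        obtain ⟨k, hbk⟩ := hcoverB b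
        have hik : i < k := by
          by_contra hk
          exact hbB' ((hmemB' b).2 ⟨k, le_of_not_gt hk, hbk⟩)
        exact hflow0 k j (lt_of_le_of_lt hji hik) b hbk c hcj
    calc ∑ c ∈ C' \ T, N.p c
        = ∑ c ∈ C' \ T, ∑ b ∈ B' \ S, fstar b c := Finset.sum_congr rfl hsatle
      _ = ∑ b ∈ B' \ S, ∑ c ∈ C' \ T, fstar b c := Finset.sum_comm
      _ ≤ ∑ b ∈ B' \ S, ∑ c, fstar b c := by
          refine Finset.sum_le_sum fun b _ => ?_
          exact Finset.sum_le_sum_of_subset_of_nonneg (Finset.subset_univ _)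
            (fun c _ _ => hf0 b c)
      _ ≤ ∑ b ∈ B' \ S, max 0 (N.e b - lam) := by
          refine Finset.sum_le_sum fun b hb => ?_
          obtain ⟨hbB', _⟩ := Finset.mem_sdiff.1 hb
          obtain ⟨j, hji, hbj⟩ := (hmemB' b).1 hbB'
          have hs : N.e b - ∑ c, fstar b c = r j := hsurp j b hbj
          have hr : r i ≤ r j := hranti.antitone hji
          have hlj : lam ≤ r j := le_trans hlam2 hr
          have : ∑ c, fstar b c ≤ N.e b - lam := by linarith
          exact this.trans (le_max_right _ _)
  have hcap : cutCap N lam (S ∪ B') (T ∪ C') ≤ cutCap N lam S T := by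
    unfold cutCap
    have e1 : (S ∪ B')ᶜ = Sᶜ \ B' := by
      ext b; simp [Finset.mem_compl, Finset.mem_sdiff, not_or]
    have e2 : T ∪ C' = T ∪ (C' \ T) := by
      rw [Finset.union_sdiff_self_eq_union]
    have e3 : ∑ c ∈ T ∪ (C' \ T), N.p c = ∑ c ∈ T, N.p c + ∑ c ∈ C' \ T, N.p c :=
      Finset.sum_union Finset.disjoint_sdiff
    have e4 : ∑ b ∈ Sᶜ, max 0 (N.e b - lam)
        = ∑ b ∈ Sᶜ \ B', max 0 (N.e b - lam) + ∑ b ∈ B' \ S, max 0 (N.e b - lam) := by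
      have e5 : Sᶜ = (Sᶜ \ B') ∪ (B' \ S) := by
        ext b
        simp only [Finset.mem_compl, Finset.mem_union, Finset.mem_sdiff, Finset.mem_compl]
        tauto
      have e6 : Disjoint (Sᶜ \ B') (B' \ S) := by
        rw [Finset.disjoint_left]
        intro b hb hb'
        exact (Finset.mem_sdiff.1 hb).2 (Finset.mem_sdiff.1 hb').1
      conv_lhs => rw [e5]
      rw [Finset.sum_union e6]
    rw [e1, e2, e3, e4]
    linarith
  have hmin' : IsMinCut N lam (S ∪ B') (T ∪ C') :=
    ⟨hcut', fun S'' T'' h'' => le_trans hcap (hminST S'' T'' h'')⟩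
  obtain ⟨hS, hT⟩ := hmsink _ _ hmin'
  exact ⟨Finset.subset_union_right.trans hS, Finset.subset_union_right.trans hT⟩
end

section
/- For every λ > r_1, the pair (∅, ∅) is the unique minimum cut at λ; in particular, κ(λ) = ∑_{b∈B} max(0, e(b) − λ) and every buyer and every good lies on the sink side of every minimum cut at λ. -/
open scoped Classical

variable {B C : Type} [Fintype B] [Fintype C] [Nonempty B] [Nonempty C]

/-- For `λ > r_1`, `(∅, ∅)` is the unique minimum cut at `λ`; in
particular `κ(λ) = ∑_b max(0, e(b) − λ)` and everything lies on the sink side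
of every minimum cut at `λ`. -/
theorem empty_cut_unique_min (N : EqNet B C)
    {h : ℕ} (hpos : 0 < h)
    (BB : Fin h → Finset B) (CC : Fin h → Finset C) (r : Fin h → ℝ)
    (fstar : B → C → ℝ) (hbal : IsBalancedFlow N fstar)
    (hBne : ∀ i, (BB i).Nonempty)
    (hBdisj : ∀ i j, i ≠ j → Disjoint (BB i) (BB j))
    (hBcover : Finset.univ.biUnion BB = Finset.univ)
    (hCdisj : ∀ i j, i ≠ j → Disjoint (CC i) (CC j))
    (hCcover : Finset.univ.biUnion CC = Finset.univ)
    (hranti : StrictAnti r)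
    (hrlast : r ⟨h - 1, Nat.sub_lt hpos Nat.one_pos⟩ = 0)
    (hsurp : ∀ i, ∀ b ∈ BB i, surplus N fstar b = r i)
    (hsat : ∀ i : Fin h, (i : ℕ) + 1 < h → ∀ c ∈ CC i, Saturated N fstar c)
    (hflow0 : ∀ i j : Fin h, j < i → ∀ b ∈ BB i, ∀ c ∈ CC j, fstar b c = 0)
    (hnoedge : ∀ i j : Fin h, i < j → ∀ b ∈ BB i, ∀ c ∈ CC j, ¬ N.E b c)
    (hrecv : ∀ i : Fin h, (i : ℕ) + 1 < h → ∀ c ∈ CC i, ∃ b ∈ BB i, 0 < fstar b c)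
    (lam : ℝ) (hlam : r ⟨0, hpos⟩ < lam) :
    IsMinCut N lam (∅ : Finset B) (∅ : Finset C) ∧
    (∀ S T, IsMinCut N lam S T → S = ∅ ∧ T = ∅) ∧
    kappa N lam = ∑ b, max 0 (N.e b - lam) := by
  obtain ⟨⟨⟨hf0, hfE, hfe, hfp⟩, _⟩, _⟩ := hbal
  -- every buyer's surplus is < lam
  have hsur : ∀ b : B, N.e b - lam < ∑ c, fstar b c := by
    intro b
    have hb : b ∈ Finset.univ.biUnion BB := by rw [hBcover]; exact Finset.mem_univ b
    obtain ⟨i, -, hbi⟩ := Finset.mem_biUnion.1 hb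
    have h1 : surplus N fstar b = r i := hsurp i b hbi
    have h2 : r i ≤ r ⟨0, hpos⟩ := hranti.antitone (by simp [Fin.le_def])
    unfold surplus at h1
    linarith
  have hmaxle : ∀ b : B, max 0 (N.e b - lam) ≤ ∑ c, fstar b c := fun b =>
    max_le (Finset.sum_nonneg fun c _ => hf0 b c) (le_of_lt (hsur b))
  have hchain : ∀ S T, IsCut N S T →
      ∑ b ∈ S, ∑ c, fstar b c ≤ ∑ c ∈ T, N.p c := by
    intro S T hcut
    calc ∑ b ∈ S, ∑ c, fstar b c = ∑ b ∈ S, ∑ c ∈ T, fstar b c := by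
          refine Finset.sum_congr rfl fun b hb => ?_
          refine (Finset.sum_subset (Finset.subset_univ T) ?_).symm
          intro c _ hcT
          exact hfE b c fun hE => hcT (hcut b hb c hE)
      _ = ∑ c ∈ T, ∑ b ∈ S, fstar b c := Finset.sum_comm
      _ ≤ ∑ c ∈ T, ∑ b, fstar b c :=
          Finset.sum_le_sum fun c _ =>
            Finset.sum_le_sum_of_subset_of_nonneg (Finset.subset_univ S)
              (fun b _ _ => hf0 b c)
      _ ≤ ∑ c ∈ T, N.p c := Finset.sum_le_sum fun c _ => hfp c
  have key : ∀ S T, IsCut N S T →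
      ∑ b ∈ S, max 0 (N.e b - lam) ≤ ∑ c ∈ T, N.p c := fun S T hcut =>
    le_trans (Finset.sum_le_sum fun b _ => hmaxle b) (hchain S T hcut)
  have keystrict : ∀ S T, IsCut N S T → (S ≠ ∅ ∨ T ≠ ∅) →
      ∑ b ∈ S, max 0 (N.e b - lam) < ∑ c ∈ T, N.p c := by
    intro S T hcut hne
    have hT : T.Nonempty := by
      rcases hne with hS | hT
      · obtain ⟨b, hb⟩ := Finset.nonempty_iff_ne_empty.2 hS
        obtain ⟨c, hc⟩ := N.buyer_adj b
        exact ⟨c, hcut b hb c hc⟩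
      · exact Finset.nonempty_iff_ne_empty.2 hT
    by_cases hS : ∃ b ∈ S, 0 < ∑ c, fstar b c
    · obtain ⟨b0, hb0, hpos0⟩ := hS
      have h1 : ∑ b ∈ S, max 0 (N.e b - lam) < ∑ b ∈ S, ∑ c, fstar b c :=
        Finset.sum_lt_sum (fun b _ => hmaxle b)
          ⟨b0, hb0, max_lt hpos0 (hsur b0)⟩
      exact h1.trans_le (hchain S T hcut)
    · push_neg at hS
      have hzero : ∑ b ∈ S, max 0 (N.e b - lam) = 0 := by
        refine Finset.sum_eq_zero fun b hb => ?_
        have h1 := hS b hb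
        have h2 := hmaxle b
        have h3 : (0:ℝ) ≤ max 0 (N.e b - lam) := le_max_left _ _
        linarith
      rw [hzero]
      exact Finset.sum_pos (fun c _ => N.p_pos c) hT
  have hcap : ∀ S T, cutCap N lam S T =
      ∑ b, max 0 (N.e b - lam) - ∑ b ∈ S, max 0 (N.e b - lam) + ∑ c ∈ T, N.p c := by
    intro S T
    unfold cutCap
    linarith [Finset.sum_compl_add_sum S fun b => max 0 (N.e b - lam)]
  have hemptycut : IsCut N (∅ : Finset B) (∅ : Finset C) :=
    fun b hb => absurd hb (Finset.notMem_empty b)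
  have hmin : IsMinCut N lam (∅ : Finset B) (∅ : Finset C) := by
    refine ⟨hemptycut, fun S' T' hcut' => ?_⟩
    rw [hcap, hcap]
    simp only [Finset.sum_empty]
    linarith [key S' T' hcut']
  have huniq : ∀ S T, IsMinCut N lam S T → S = ∅ ∧ T = ∅ := by
    intro S T hmc
    by_contra hne
    rw [not_and_or] at hne
    have h1 := keystrict S T hmc.1 hne
    have h2 := hmc.2 ∅ ∅ hemptycut
    rw [hcap S T, hcap ∅ ∅] at h2
    simp only [Finset.sum_empty] at h2
    linarith
  have hmem : (∑ b, max 0 (N.e b - lam)) ∈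
      {x | ∃ S T, IsCut N S T ∧ cutCap N lam S T = x} :=
    ⟨∅, ∅, hemptycut, by simp [cutCap]⟩
  have hlb : ∀ x ∈ {x | ∃ S T, IsCut N S T ∧ cutCap N lam S T = x},
      ∑ b, max 0 (N.e b - lam) ≤ x := by
    rintro x ⟨S, T, hcut, rfl⟩
    rw [hcap]
    linarith [key S T hcut]
  exact ⟨hmin, huniq, le_antisymm (csInf_le ⟨_, hlb⟩ hmem) (le_csInf ⟨_, hmem⟩ hlb)⟩
end

section
/- For every i with 1 ≤ i < h and every λ with r_{i+1} < λ ≤ r_i, the min-cut capacity function of the parametric network satisfies κ(λ) = ∑_{c ∈ C_1∪…∪C_i} p(c) + ∑_{b ∈ B_{i+1}∪…∪B_h} max(0, e(b) − λ). -/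
open scoped Classical

variable {B C : Type} [Fintype B] [Fintype C] [Nonempty B] [Nonempty C]

/-- For `1 ≤ i < h` and `r_{i+1} < λ ≤ r_i`,
`κ(λ) = ∑_{c ∈ C_1∪…∪C_i} p(c) + ∑_{b ∈ B_{i+1}∪…∪B_h} max(0, e(b) − λ)`. -/
theorem kappa_formula (N : EqNet B C)
    {h : ℕ} (hpos : 0 < h)
    (BB : Fin h → Finset B) (CC : Fin h → Finset C) (r : Fin h → ℝ)
    (fstar : B → C → ℝ) (hbal : IsBalancedFlow N fstar)
    (hBne : ∀ i, (BB i).Nonempty)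
    (hBdisj : ∀ i j, i ≠ j → Disjoint (BB i) (BB j))
    (hBcover : Finset.univ.biUnion BB = Finset.univ)
    (hCdisj : ∀ i j, i ≠ j → Disjoint (CC i) (CC j))
    (hCcover : Finset.univ.biUnion CC = Finset.univ)
    (hranti : StrictAnti r)
    (hrlast : r ⟨h - 1, Nat.sub_lt hpos Nat.one_pos⟩ = 0)
    (hsurp : ∀ i, ∀ b ∈ BB i, surplus N fstar b = r i)
    (hsat : ∀ i : Fin h, (i : ℕ) + 1 < h → ∀ c ∈ CC i, Saturated N fstar c)
    (hflow0 : ∀ i j : Fin h, j < i → ∀ b ∈ BB i, ∀ c ∈ CC j, fstar b c = 0)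
    (hnoedge : ∀ i j : Fin h, i < j → ∀ b ∈ BB i, ∀ c ∈ CC j, ¬ N.E b c)
    (hrecv : ∀ i : Fin h, (i : ℕ) + 1 < h → ∀ c ∈ CC i, ∃ b ∈ BB i, 0 < fstar b c)
    (i : Fin h) (hi : (i : ℕ) + 1 < h) (lam : ℝ)
    (hlam1 : r ⟨(i : ℕ) + 1, hi⟩ < lam) (hlam2 : lam ≤ r i) :
    kappa N lam = ∑ c ∈ blocksUpTo CC i, N.p c +
      ∑ b ∈ (Finset.univ.filter (fun j => i < j)).biUnion BB, max 0 (N.e b - lam) := by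
  
  classical
  obtain ⟨⟨⟨hf0, hfE, hfB, hfC⟩, _⟩, _⟩ := hbal
  -- block index functions
  have hmemB : ∀ b : B, ∃ j, b ∈ BB j := by
    intro b
    have hb : b ∈ Finset.univ.biUnion BB := by rw [hBcover]; exact Finset.mem_univ b
    simpa using hb
  have hmemC : ∀ c : C, ∃ j, c ∈ CC j := by
    intro c
    have hc : c ∈ Finset.univ.biUnion CC := by rw [hCcover]; exact Finset.mem_univ c
    simpa using hc
  set β : B → Fin h := fun b => (hmemB b).choose with hβdef
  have hβ : ∀ b, b ∈ BB (β b) := fun b => (hmemB b).choose_spec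
  set γ : C → Fin h := fun c => (hmemC c).choose with hγdef
  have hγ : ∀ c, c ∈ CC (γ c) := fun c => (hmemC c).choose_spec
  have hβu : ∀ b j, b ∈ BB j → j = β b := by
    intro b j hj
    by_contra hne
    exact Finset.disjoint_left.mp (hBdisj j (β b) hne) hj (hβ b)
  have hγu : ∀ c j, c ∈ CC j → j = γ c := by
    intro c j hj
    by_contra hne
    exact Finset.disjoint_left.mp (hCdisj j (γ c) hne) hj (hγ c)
  set S : Finset B := blocksUpTo BB i with hS
  set T : Finset C := blocksUpTo CC i with hT
  set Bgt : Finset B := (Finset.univ.filter (fun j => i < j)).biUnion BB with hBgt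
  have hSmem : ∀ b, b ∈ S ↔ β b ≤ i := by
    intro b
    simp only [hS, blocksUpTo, Finset.mem_biUnion, Finset.mem_filter, Finset.mem_univ, true_and]
    constructor
    · rintro ⟨j, hji, hj⟩; rwa [hβu b j hj] at hji
    · intro hb; exact ⟨β b, hb, hβ b⟩
  have hTmem : ∀ c, c ∈ T ↔ γ c ≤ i := by
    intro c
    simp only [hT, blocksUpTo, Finset.mem_biUnion, Finset.mem_filter, Finset.mem_univ, true_and]
    constructor
    · rintro ⟨j, hji, hj⟩; rwa [hγu c j hj] at hji
    · intro hc; exact ⟨γ c, hc, hγ c⟩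
  have hBgtmem : ∀ b, b ∈ Bgt ↔ i < β b := by
    intro b
    simp only [hBgt, Finset.mem_biUnion, Finset.mem_filter, Finset.mem_univ, true_and]
    constructor
    · rintro ⟨j, hji, hj⟩; rwa [hβu b j hj] at hji
    · intro hb; exact ⟨β b, hb, hβ b⟩
  have hSc : Sᶜ = Bgt := by
    ext b
    simp only [Finset.mem_compl, hSmem b, hBgtmem b, not_le]
  -- flow vanishes across blocks
  have hcross : ∀ b c, β b ≠ γ c → fstar b c = 0 := by
    intro b c hne
    rcases lt_or_gt_of_ne hne with hlt | hgt
    · exact hfE b c (hnoedge (β b) (γ c) hlt b (hβ b) c (hγ c))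
    · exact hflow0 (β b) (γ c) hgt b (hβ b) c (hγ c)
  have hsum : ∀ b, ∑ c, fstar b c = N.e b - r (β b) := by
    intro b
    have := hsurp (β b) b (hβ b)
    unfold surplus at this
    linarith
  have hsnn : ∀ b, 0 ≤ ∑ c, fstar b c := fun b =>
    Finset.sum_nonneg fun c _ => hf0 b c
  -- bounds on buyer sums
  have hlow : ∀ b, i < β b → max 0 (N.e b - lam) ≤ ∑ c, fstar b c := by
    intro b hb
    have hle : (⟨(i : ℕ) + 1, hi⟩ : Fin h) ≤ β b := by
      have hlt : (i : ℕ) < (β b : ℕ) := hb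
      exact Fin.le_def.mpr (Nat.succ_le_of_lt hlt)
    have h1 : r (β b) ≤ r ⟨(i : ℕ) + 1, hi⟩ := hranti.antitone hle
    have h2 := hsum b
    exact max_le (hsnn b) (by linarith)
  have hhigh : ∀ b, β b ≤ i → ∑ c, fstar b c ≤ max 0 (N.e b - lam) := by
    intro b hb
    have h1 : r i ≤ r (β b) := hranti.antitone hb
    have h2 := hsum b
    refine le_trans ?_ (le_max_right _ _)
    linarith
  -- block sum equality : ∑_{b∈S} s_b = ∑_{c∈T} p c
  have hST : ∑ b ∈ S, ∑ c, fstar b c = ∑ c ∈ T, N.p c := by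
    have step1 : ∀ b ∈ S, ∑ c, fstar b c = ∑ c ∈ T, fstar b c := by
      intro b hb
      refine (Finset.sum_subset (Finset.subset_univ T) ?_).symm
      intro c _ hc
      have hgt : i < γ c := lt_of_not_ge (fun hle => hc ((hTmem c).mpr hle))
      exact hcross b c (ne_of_lt (lt_of_le_of_lt ((hSmem b).mp hb) hgt))
    rw [Finset.sum_congr rfl step1, Finset.sum_comm]
    refine Finset.sum_congr rfl ?_
    intro c hc
    have hci : γ c ≤ i := (hTmem c).mp hc
    have hsatc : Saturated N fstar c := by
      refine hsat (γ c) ?_ c (hγ c)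
      have : (γ c : ℕ) ≤ (i : ℕ) := hci
      omega
    rw [← hsatc]
    refine Finset.sum_subset (Finset.subset_univ S) ?_
    intro b _ hb
    have hgt : i < β b := lt_of_not_ge (fun hle => hb ((hSmem b).mpr hle))
    exact hcross b c (ne_of_gt (lt_of_le_of_lt hci hgt))
  -- the scaled flow g
  set t : B → ℝ := fun b =>
    if (∑ c, fstar b c) = 0 then 0 else max 0 (N.e b - lam) / (∑ c, fstar b c) with htdef
  set g : B → C → ℝ := fun b c => if β b ≤ i then fstar b c else t b * fstar b c with hgdef
  have ht0 : ∀ b, 0 ≤ t b := by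
    intro b
    simp only [htdef]
    split
    · exact le_refl 0
    · exact div_nonneg (le_max_left _ _) (hsnn b)
  have hts : ∀ b, i < β b → t b * (∑ c, fstar b c) = max 0 (N.e b - lam) := by
    intro b hb
    by_cases hs : (∑ c, fstar b c) = 0
    · have h1 := hlow b hb
      rw [hs] at h1
      simp only [htdef, if_pos hs, zero_mul]
      exact (le_antisymm h1 (le_max_left _ _)).symm
    · simp only [htdef, if_neg hs]
      exact div_mul_cancel₀ _ hs
  have hgle : ∀ b c, g b c ≤ fstar b c := by
    intro b c
    simp only [hgdef]
    split
    · exact le_refl _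
    · rename_i hb
      have hb' : i < β b := lt_of_not_ge hb
      by_cases hs : (∑ c, fstar b c) = 0
      · have hz : fstar b c = 0 := by
          have := (Finset.sum_eq_zero_iff_of_nonneg (fun c _ => hf0 b c)).mp hs
          exact this c (Finset.mem_univ c)
        rw [hz, mul_zero]
      · have hspos : 0 < ∑ c, fstar b c := lt_of_le_of_ne (hsnn b) (Ne.symm hs)
        have ht1 : t b ≤ 1 := by
          have := hts b hb'
          have h2 := hlow b hb'
          nlinarith
        exact mul_le_of_le_one_left (hf0 b c) ht1
  have hg0 : ∀ b c, 0 ≤ g b c := by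
    intro b c
    simp only [hgdef]
    split
    · exact hf0 b c
    · exact mul_nonneg (ht0 b) (hf0 b c)
  have hgSrow : ∀ b, β b ≤ i → ∑ c, g b c = ∑ c, fstar b c := by
    intro b hb
    refine Finset.sum_congr rfl fun c _ => ?_
    simp only [hgdef, if_pos hb]
  have hgBgtrow : ∀ b, i < β b → ∑ c, g b c = max 0 (N.e b - lam) := by
    intro b hb
    have : ∑ c, g b c = t b * ∑ c, fstar b c := by
      rw [Finset.mul_sum]
      refine Finset.sum_congr rfl fun c _ => ?_
      simp only [hgdef, if_neg (not_le.mpr hb)]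
    rw [this, hts b hb]
  -- value of g
  have hval : ∑ b, ∑ c, g b c = ∑ c ∈ T, N.p c + ∑ b ∈ Bgt, max 0 (N.e b - lam) := by
    rw [← Finset.sum_add_sum_compl S (fun b => ∑ c, g b c)]
    congr 1
    · rw [← hST]
      exact Finset.sum_congr rfl fun b hb => hgSrow b ((hSmem b).mp hb)
    · rw [hSc]
      exact Finset.sum_congr rfl fun b hb => hgBgtrow b ((hBgtmem b).mp hb)
  -- lower bound on any cut
  have hbound : ∀ S' T', IsCut N S' T' →
      ∑ c ∈ T, N.p c + ∑ b ∈ Bgt, max 0 (N.e b - lam) ≤ cutCap N lam S' T' := by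
    intro S' T' hcut
    rw [← hval]
    have hsplit : ∑ b, ∑ c, g b c
        = ∑ b ∈ S', ∑ c, g b c + ∑ b ∈ S'ᶜ, ∑ c, g b c :=
      (Finset.sum_add_sum_compl S' _).symm
    rw [hsplit]
    unfold cutCap
    rw [add_comm (∑ b ∈ S'ᶜ, max 0 (N.e b - lam)) (∑ c ∈ T', N.p c)]
    refine add_le_add ?_ ?_
    · -- source side: ∑_{b∈S'} ∑_c g ≤ ∑_{c∈T'} p c
      have h1 : ∀ b ∈ S', ∑ c, g b c = ∑ c ∈ T', g b c := by
        intro b hb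
        refine (Finset.sum_subset (Finset.subset_univ T') ?_).symm
        intro c _ hc
        by_cases he : N.E b c
        · exact absurd (hcut b hb c he) hc
        · simp only [hgdef]
          rw [hfE b c he]
          split <;> simp
      rw [Finset.sum_congr rfl h1, Finset.sum_comm]
      refine Finset.sum_le_sum fun c _ => ?_
      calc ∑ b ∈ S', g b c ≤ ∑ b, g b c :=
            Finset.sum_le_sum_of_subset_of_nonneg (Finset.subset_univ S')
              (fun b _ _ => hg0 b c)
        _ ≤ ∑ b, fstar b c := Finset.sum_le_sum fun b _ => hgle b c
        _ ≤ N.p c := hfC c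
    · -- sink side buyers
      refine Finset.sum_le_sum fun b _ => ?_
      by_cases hb : β b ≤ i
      · rw [hgSrow b hb]; exact hhigh b hb
      · rw [hgBgtrow b (lt_of_not_ge hb)]
  -- our cut
  have hcutST : IsCut N S T := by
    intro b hb c he
    have hbi : β b ≤ i := (hSmem b).mp hb
    rw [hTmem c]
    by_contra hc
    exact hnoedge (β b) (γ c) (lt_of_le_of_lt hbi (lt_of_not_ge hc)) b (hβ b) c (hγ c) he
  have hcapST : cutCap N lam S T = ∑ c ∈ T, N.p c + ∑ b ∈ Bgt, max 0 (N.e b - lam) := by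
    unfold cutCap
    rw [hSc, add_comm]
  have hleast : IsLeast {x | ∃ S T, IsCut N S T ∧ cutCap N lam S T = x}
      (∑ c ∈ T, N.p c + ∑ b ∈ Bgt, max 0 (N.e b - lam)) := by
    constructor
    · exact ⟨S, T, hcutST, hcapST⟩
    · rintro x ⟨S', T', hcut, rfl⟩
      exact hbound S' T' hcut
  exact hleast.csInf_eq
end

section
/- For all λ, λ' with 0 < λ' ≤ λ, the minimum cuts of minimum sink side are nested: if (S,T) is the minimum cut of minimum sink side at λ and (S',T') is the minimum cut of minimum sink side at λ', then S ⊆ S' and T ⊆ T' (the source side only grows as the parameter decreases). -/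
open scoped Classical

variable {B C : Type} [Fintype B] [Fintype C] [Nonempty B] [Nonempty C]

/-- The minimum cuts of minimum sink side are nested: the source side
only grows as the parameter decreases. -/
theorem min_sink_cuts_nested (N : EqNet B C)
    {h : ℕ} (hpos : 0 < h)
    (BB : Fin h → Finset B) (CC : Fin h → Finset C) (r : Fin h → ℝ)
    (fstar : B → C → ℝ) (hbal : IsBalancedFlow N fstar)
    (hBne : ∀ i, (BB i).Nonempty)
    (hBdisj : ∀ i j, i ≠ j → Disjoint (BB i) (BB j))
    (hBcover : Finset.univ.biUnion BB = Finset.univ)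
    (hCdisj : ∀ i j, i ≠ j → Disjoint (CC i) (CC j))
    (hCcover : Finset.univ.biUnion CC = Finset.univ)
    (hranti : StrictAnti r)
    (hrlast : r ⟨h - 1, Nat.sub_lt hpos Nat.one_pos⟩ = 0)
    (hsurp : ∀ i, ∀ b ∈ BB i, surplus N fstar b = r i)
    (hsat : ∀ i : Fin h, (i : ℕ) + 1 < h → ∀ c ∈ CC i, Saturated N fstar c)
    (hflow0 : ∀ i j : Fin h, j < i → ∀ b ∈ BB i, ∀ c ∈ CC j, fstar b c = 0)
    (hnoedge : ∀ i j : Fin h, i < j → ∀ b ∈ BB i, ∀ c ∈ CC j, ¬ N.E b c)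
    (hrecv : ∀ i : Fin h, (i : ℕ) + 1 < h → ∀ c ∈ CC i, ∃ b ∈ BB i, 0 < fstar b c)
    (lam lam' : ℝ) (h0 : 0 < lam') (hle : lam' ≤ lam)
    (S : Finset B) (T : Finset C) (hST : HasMinSink N lam S T)
    (S' : Finset B) (T' : Finset C) (hST' : HasMinSink N lam' S' T') :
    S ⊆ S' ∧ T ⊆ T' := by
  classical
  -- Uncrossing argument. The intersection and union of cuts are cuts.
  have hcutS : IsCut N S T := hST.1.1
  have hcutS' : IsCut N S' T' := hST'.1.1
  have hcutInter : IsCut N (S ∩ S') (T ∩ T') := by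
    intro b hb c hEc
    simp only [Finset.mem_inter] at hb ⊢
    exact ⟨hcutS b hb.1 c hEc, hcutS' b hb.2 c hEc⟩
  have hcutUnion : IsCut N (S ∪ S') (T ∪ T') := by
    intro b hb c hEc
    simp only [Finset.mem_union] at hb ⊢
    rcases hb with hb | hb
    · exact Or.inl (hcutS b hb c hEc)
    · exact Or.inr (hcutS' b hb c hEc)
  -- Modularity of cut capacity
  have hmod : ∀ l : ℝ, cutCap N l (S ∩ S') (T ∩ T') + cutCap N l (S ∪ S') (T ∪ T')
      = cutCap N l S T + cutCap N l S' T' := by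
    intro l
    unfold cutCap
    rw [Finset.compl_inter, Finset.compl_union]
    have h1 := Finset.sum_union_inter (s₁ := Sᶜ) (s₂ := S'ᶜ)
      (f := fun b => max 0 (N.e b - l))
    have h2 := Finset.sum_union_inter (s₁ := T) (s₂ := T') (f := N.p)
    linarith
  -- Decompose the intersection-cut capacity minus cap of (S,T) at parameter l
  set D : Finset B := S'ᶜ \ Sᶜ with hD
  have hdecomp : ∀ l : ℝ, cutCap N l (S ∩ S') (T ∩ T') - cutCap N l S T
      = ∑ b ∈ D, max 0 (N.e b - l) + (∑ c ∈ T ∩ T', N.p c - ∑ c ∈ T, N.p c) := by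
    intro l
    unfold cutCap
    rw [Finset.compl_inter]
    have hun : Sᶜ ∪ S'ᶜ = Sᶜ ∪ D := by
      rw [hD, Finset.union_sdiff_self_eq_union]
    have hdisj : Disjoint Sᶜ D := Finset.disjoint_sdiff
    rw [hun, Finset.sum_union hdisj]
    ring
  -- (S ∩ S', T ∩ T') is at least as expensive as (S,T) at lam
  have hB : cutCap N lam S T ≤ cutCap N lam (S ∩ S') (T ∩ T') :=
    hST.1.2 _ _ hcutInter
  -- the D-sum only grows as the parameter decreases
  have hDmono : ∑ b ∈ D, max 0 (N.e b - lam) ≤ ∑ b ∈ D, max 0 (N.e b - lam') := by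
    apply Finset.sum_le_sum
    intro b _
    exact max_le_max le_rfl (by linarith)
  have hC : cutCap N lam' S T ≤ cutCap N lam' (S ∩ S') (T ∩ T') := by
    have h1 := hdecomp lam
    have h2 := hdecomp lam'
    linarith
  -- hence the union is a min cut at lam'
  have hUle : cutCap N lam' (S ∪ S') (T ∪ T') ≤ cutCap N lam' S' T' := by
    have := hmod lam'
    linarith
  have hUmincut : IsMinCut N lam' (S ∪ S') (T ∪ T') := by
    refine ⟨hcutUnion, fun S₀ T₀ hS₀ => ?_⟩
    exact le_trans hUle (hST'.1.2 _ _ hS₀)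
  have := hST'.2 _ _ hUmincut
  exact ⟨(Finset.union_subset_iff.mp this.1).1, (Finset.union_subset_iff.mp this.2).1⟩
end

section
/- (Correctness of step 4 of the algorithm) Let f* be a balanced flow of the equality network N and let r* = r_{f*} be its surplus vector. Define a flow of the network N' to be a function f : B × C → ℝ with f(b,c) ≥ 0 for all (b,c), f(b,c) = 0 whenever (b,c) ∉ E, ∑_{c∈C} f(b,c) ≤ e(b) − r*(b) for every b ∈ B, and ∑_{b∈B} f(b,c) ≤ p(c) for every c ∈ C. Then: (1) the maximum value of a flow of N' equals ∑_{b∈B} (e(b) − r*(b)); (2) every maximum flow of N' saturates every reduced source capacity, i.e., ∑_{c∈C} f(b,c) = e(b) − r*(b) for every b ∈ B; and (3) every maximum flow of N' is a balanced flow of N. -/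
open scoped Classical

variable {B C : Type} [Fintype B] [Fintype C] [Nonempty B] [Nonempty C]

/-- A flow of the network `N'`, in which the capacity of the source edge of buyer
`b` is reduced to `e(b) − r*(b)`. -/
def IsFlowN' (N : EqNet B C) (rstar : B → ℝ) (f : B → C → ℝ) : Prop :=
  (∀ b c, 0 ≤ f b c) ∧ (∀ b c, ¬ N.E b c → f b c = 0) ∧
  (∀ b, ∑ c, f b c ≤ N.e b - rstar b) ∧ (∀ c, ∑ b, f b c ≤ N.p c)

/-- (1) the maximum value of a flow of `N'` is `∑_b (e(b) − r*(b))`;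
(2) every maximum flow of `N'` saturates every reduced source capacity;
(3) every maximum flow of `N'` is a balanced flow of `N`. -/
theorem max_flow_of_reduced_network_is_balanced (N : EqNet B C)
    (fstar : B → C → ℝ) (hbal : IsBalancedFlow N fstar) :
    ((∃ f, IsFlowN' N (surplus N fstar) f ∧
        flowValue f = ∑ b, (N.e b - surplus N fstar b)) ∧
      (∀ f, IsFlowN' N (surplus N fstar) f →
        flowValue f ≤ ∑ b, (N.e b - surplus N fstar b))) ∧
    (∀ f, IsFlowN' N (surplus N fstar) f →
      (∀ g, IsFlowN' N (surplus N fstar) g → flowValue g ≤ flowValue f) →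
      (∀ b, ∑ c, f b c = N.e b - surplus N fstar b) ∧ IsBalancedFlow N f) := by
  obtain ⟨⟨⟨hpos, hE, hsrc, hsnk⟩, hmax⟩, hmin⟩ := hbal
  -- f* is a flow of N' with row sums exactly at capacity
  have hrow : ∀ b, ∑ c, fstar b c = N.e b - surplus N fstar b := by
    intro b; simp [surplus]
  have hfstar : IsFlowN' N (surplus N fstar) fstar :=
    ⟨hpos, hE, fun b => le_of_eq (hrow b), hsnk⟩
  have hub : ∀ f, IsFlowN' N (surplus N fstar) f →
      flowValue f ≤ ∑ b, (N.e b - surplus N fstar b) := by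
    intro f ⟨_, _, hs, _⟩
    exact Finset.sum_le_sum fun b _ => hs b
  have hval : flowValue fstar = ∑ b, (N.e b - surplus N fstar b) :=
    Finset.sum_congr rfl fun b _ => hrow b
  refine ⟨⟨⟨fstar, hfstar, hval⟩, hub⟩, ?_⟩
  intro f hf hfmax
  have hfval : flowValue f = ∑ b, (N.e b - surplus N fstar b) :=
    le_antisymm (hub f hf) (hval ▸ hfmax fstar hfstar)
  obtain ⟨hfpos, hfE, hfsrc, hfsnk⟩ := hf
  have hsat : ∀ b, ∑ c, f b c = N.e b - surplus N fstar b := by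
    have h0 : ∑ b, ((N.e b - surplus N fstar b) - ∑ c, f b c) = 0 := by
      rw [Finset.sum_sub_distrib]
      have : ∑ b, ∑ c, f b c = flowValue f := rfl
      rw [this, hfval, sub_self]
    intro b
    have := (Finset.sum_eq_zero_iff_of_nonneg
      (fun b _ => sub_nonneg.mpr (hfsrc b))).mp h0 b (Finset.mem_univ b)
    linarith [this]
  refine ⟨hsat, ?_⟩
  -- f is a flow of N
  have hrstar_nonneg : ∀ b, 0 ≤ surplus N fstar b := fun b =>
    sub_nonneg.mpr (hsrc b)
  have hfflow : IsFlow N f :=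
    ⟨hfpos, hfE, fun b => (hfsrc b).trans (by linarith [hrstar_nonneg b]), hfsnk⟩
  have hvaleq : flowValue f = flowValue fstar := by rw [hfval, hval]
  have hfmaxN : IsMaxFlow N f :=
    ⟨hfflow, fun g hg => hvaleq ▸ hmax g hg⟩
  refine ⟨hfmaxN, fun g hg => ?_⟩
  have hsurp : ∀ b, surplus N f b = surplus N fstar b := by
    intro b; simp [surplus, hsat b]
  calc ∑ b, (surplus N f b) ^ 2 = ∑ b, (surplus N fstar b) ^ 2 :=
        Finset.sum_congr rfl fun b _ => by rw [hsurp b]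
    _ ≤ ∑ b, (surplus N g b) ^ 2 := hmin g hg
end
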